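/- Let a₁,…,a_N be nonnegative reals and Q₁,…,Q_N vectors in ℂ³. Then (∑_{ℓ=1}^N ∑_{j≠ℓ} a_{ℓj} |Q_j| |Q_ℓ|) ≤ (max_{ℓ} ∑_{j≠ℓ} a_{ℓj}) · ∑_{j=1}^N |Q_j|², whenever the weights satisfy a_{ℓj} = a_{jℓ}. In particular, if a_{ℓj} = ‖z_ℓ − z_j‖^{−1} with min_{ℓ≠j}‖z_ℓ−z_j‖ ≥ d and the points z_j lie in a fixed bounded domain, then ∑_{ℓ}∑_{j≠ℓ} ‖z_ℓ−z_j‖^{−1}|Q_j||Q_ℓ| ≤ C d^{−3}·N^{1/2}·d^{3/2}·∑_j|Q_j|² for a constant C depending only on the domain. -/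

import Mathlib

open Finset

noncomputable section

abbrev E3 := EuclideanSpace ℝ (Fin 3)
abbrev C3 := EuclideanSpace ℂ (Fin 3)

open Metric MeasureTheory ENNReal

private lemma packing {N : ℕ} (z : Fin N → E3) (d r : ℝ) (hd : 0 < d)
    (hsep : ∀ i j, i ≠ j → d ≤ ‖z i - z j‖) (x : E3)
    (s : Finset (Fin N)) (hs : ∀ i ∈ s, z i ∈ Metric.closedBall x r) (hr : 0 ≤ r) :
    (s.card : ℝ) * (d/2)^3 ≤ (r + d/2)^3 := by
  have hrank : Module.finrank ℝ E3 = 3 := finrank_euclideanSpace_fin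
  have hd2 : (0:ℝ) < d/2 := by linarith
  have hdisj : (s : Set (Fin N)).PairwiseDisjoint (fun i => Metric.ball (z i) (d/2)) := by
    intro i _ j _ hij
    apply Metric.ball_disjoint_ball
    rw [dist_eq_norm]
    calc d/2 + d/2 = d := by ring
    _ ≤ ‖z i - z j‖ := hsep i j hij
  have hsub : ∀ i ∈ s, Metric.ball (z i) (d/2) ⊆ Metric.ball x (r + d/2) := by
    intro i hi y hy
    have h1 : dist y (z i) < d/2 := hy
    have h2 : dist (z i) x ≤ r := hs i hi
    have h3 := dist_triangle y (z i) x
    have : dist y x < r + d/2 := by linarith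
    exact this
  have hmeas : volume (⋃ i ∈ s, Metric.ball (z i) (d/2)) = ∑ i ∈ s, volume (Metric.ball (z i) (d/2)) :=
    measure_biUnion_finset hdisj (fun i _ => measurableSet_ball)
  have hball : ∀ i : Fin N, volume (Metric.ball (z i) (d/2))
      = ENNReal.ofReal ((d/2)^3) * volume (Metric.ball (0:E3) 1) := by
    intro i
    rw [Measure.addHaar_ball volume (z i) hd2.le, hrank]
  have hballbig : volume (Metric.ball x (r + d/2))
      = ENNReal.ofReal ((r + d/2)^3) * volume (Metric.ball (0:E3) 1) := by
    rw [Measure.addHaar_ball volume x (by linarith), hrank]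
  have hle : (s.card : ℝ≥0∞) * ENNReal.ofReal ((d/2)^3) * volume (Metric.ball (0:E3) 1)
      ≤ ENNReal.ofReal ((r + d/2)^3) * volume (Metric.ball (0:E3) 1) := by
    rw [← hballbig, mul_assoc]
    calc (s.card : ℝ≥0∞) * (ENNReal.ofReal ((d/2)^3) * volume (Metric.ball (0:E3) 1))
        = ∑ i ∈ s, volume (Metric.ball (z i) (d/2)) := by
          rw [Finset.sum_congr rfl (fun i _ => hball i), Finset.sum_const, nsmul_eq_mul]
      _ = volume (⋃ i ∈ s, Metric.ball (z i) (d/2)) := hmeas.symm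
      _ ≤ volume (Metric.ball x (r + d/2)) := measure_mono (Set.iUnion₂_subset hsub)
  have hpos : 0 < volume (Metric.ball (0:E3) 1) := measure_ball_pos volume 0 one_pos
  have htop : volume (Metric.ball (0:E3) 1) ≠ ⊤ := measure_ball_lt_top.ne
  have hle2 : (s.card : ℝ≥0∞) * ENNReal.ofReal ((d/2)^3) ≤ ENNReal.ofReal ((r + d/2)^3) :=
    (ENNReal.mul_le_mul_iff_left hpos.ne' htop).1 hle
  have : ENNReal.ofReal ((s.card : ℝ) * (d/2)^3) ≤ ENNReal.ofReal ((r + d/2)^3) := by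
    rwa [ENNReal.ofReal_mul (by positivity), ENNReal.ofReal_natCast]
  exact (ENNReal.ofReal_le_ofReal_iff (by positivity)).1 this


private lemma count_small {ι : Type*} [DecidableEq ι] (T : Finset ι) (r : ι → ℝ) (t : ℕ) :
    (T.filter (fun j => (T.filter (fun j' => r j' ≤ r j)).card ≤ t)).card ≤ t := by
  set m : ι → ℕ := fun j => (T.filter (fun j' => r j' ≤ r j)).card with hm
  set s := T.filter (fun j => m j ≤ t) with hs
  rcases s.eq_empty_or_nonempty with h | h
  · simp [h]
  · obtain ⟨j0, hj0, hmax⟩ := s.exists_max_image r h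
    have hsub : s ⊆ T.filter (fun j' => r j' ≤ r j0) := by
      intro j hj
      rw [Finset.mem_filter]
      exact ⟨(Finset.mem_filter.1 hj).1, hmax j hj⟩
    calc s.card ≤ m j0 := Finset.card_le_card hsub
      _ ≤ t := (Finset.mem_filter.1 hj0).2

private lemma row_bound {N : ℕ} (z : Fin N → E3) (d : ℝ) (hd : 0 < d)
    (hsep : ∀ i j, i ≠ j → d ≤ ‖z i - z j‖) (ℓ : Fin N) :
    ∑ j ∈ Finset.univ.erase ℓ, ‖z ℓ - z j‖⁻¹ ≤ 24 * (N:ℝ) ^ ((2:ℝ)/3) / d := by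
  classical
  have hN : (1:ℕ) ≤ N := Nat.one_le_iff_ne_zero.2 (by rintro rfl; exact ℓ.elim0)
  set T := Finset.univ.erase ℓ with hT
  set r : Fin N → ℝ := fun j => ‖z ℓ - z j‖ with hr
  set m : Fin N → ℕ := fun j => (T.filter (fun j' => r j' ≤ r j)).card with hm
  -- basic facts for j in T
  have hrd : ∀ j ∈ T, d ≤ r j := by
    intro j hj
    exact hsep ℓ j (Finset.ne_of_mem_erase hj).symm
  have hm1 : ∀ j ∈ T, 1 ≤ m j := by
    intro j hj
    have : j ∈ T.filter (fun j' => r j' ≤ r j) := Finset.mem_filter.2 ⟨hj, le_refl _⟩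
    exact Finset.card_pos.2 ⟨j, this⟩
  have hmN : ∀ j, m j ≤ N := by
    intro j
    calc m j ≤ T.card := Finset.card_filter_le _ _
      _ ≤ Finset.univ.card := Finset.card_le_card (Finset.erase_subset _ _)
      _ = N := Finset.card_univ.trans (Fintype.card_fin N)
  -- packing bound: d^3 * m j ≤ 27 * (r j)^3
  have hpack : ∀ j ∈ T, (m j : ℝ) * (d/2)^3 ≤ ((3/2) * r j)^3 := by
    intro j hj
    have h1 : (m j : ℝ) * (d/2)^3 ≤ (r j + d/2)^3 := by
      apply packing z d (r j) hd hsep (z ℓ)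
      · intro i hi
        have hi' := (Finset.mem_filter.1 hi).2
        rw [Metric.mem_closedBall, dist_eq_norm, ← norm_neg]
        simpa [neg_sub] using hi'
      · exact le_trans hd.le (hrd j hj)
    have h2 : r j + d/2 ≤ (3/2) * r j := by
      have := hrd j hj; linarith
    refine h1.trans (pow_le_pow_left₀ (by positivity) h2 3)
  -- hence r j ⁻¹ ≤ 3 / (d * (m j)^(1/3))
  have hinv : ∀ j ∈ T, (r j)⁻¹ ≤ 3 * d⁻¹ * ((m j : ℝ) ^ ((1:ℝ)/3))⁻¹ := by
    intro j hj
    set u := (m j : ℝ) ^ ((1:ℝ)/3) with hu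
    have hmpos : (0:ℝ) < m j := by exact_mod_cast hm1 j hj
    have hupos : 0 < u := Real.rpow_pos_of_pos hmpos _
    have hu3 : u ^ (3:ℕ) = (m j : ℝ) := by
      rw [hu, ← Real.rpow_natCast (((m j : ℝ)) ^ ((1:ℝ)/3)) 3, ← Real.rpow_mul hmpos.le]
      norm_num
    have hrpos : 0 < r j := lt_of_lt_of_le hd (hrd j hj)
    have hcube : (d * u)^3 ≤ (3 * r j)^3 := by
      have h := hpack j hj
      calc (d * u)^3 = (m j : ℝ) * (d/2)^3 * 8 := by rw [← hu3]; ring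
        _ ≤ (3/2 * r j)^3 * 8 := by linarith
        _ = (3 * r j)^3 := by ring
    have hdu : d * u ≤ 3 * r j := by
      exact le_of_pow_le_pow_left₀ (by norm_num) (by positivity) hcube
    have hdupos : 0 < d * u := by positivity
    rw [show (3:ℝ) * d⁻¹ * u⁻¹ = 3 / (d * u) by rw [div_eq_mul_inv, mul_inv]; ring]
    rw [inv_eq_one_div, div_le_div_iff₀ hrpos hdupos]
    linarith
  -- sum over fibers of Nat.log 2 (m j)
  set K := Nat.log 2 N with hK
  have hmaps : ∀ j ∈ T, Nat.log 2 (m j) ∈ Finset.range (K + 1) := by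
    intro j hj
    rw [Finset.mem_range, Nat.lt_succ_iff]
    exact Nat.log_mono_right (hmN j)
  have hfiber : ∑ k ∈ Finset.range (K+1), ∑ j ∈ T.filter (fun j => Nat.log 2 (m j) = k),
      ((m j : ℝ) ^ ((1:ℝ)/3))⁻¹ = ∑ j ∈ T, ((m j : ℝ) ^ ((1:ℝ)/3))⁻¹ :=
    Finset.sum_fiberwise_of_maps_to hmaps _
  -- per-fiber bound
  set q : ℝ := (2:ℝ) ^ ((2:ℝ)/3) with hq
  have hq1 : (1:ℝ) < q := Real.one_lt_rpow_iff_of_pos (by norm_num) |>.2 (Or.inl ⟨by norm_num, by norm_num⟩)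
  have hq2 : q ≤ 2 := by
    calc q ≤ (2:ℝ) ^ ((1:ℝ)) := Real.rpow_le_rpow_of_exponent_le (by norm_num) (by norm_num)
      _ = 2 := Real.rpow_one 2
  have hq32 : (3/2 : ℝ) ≤ q := by
    have h1 : ((3/2:ℝ) ^ (3:ℕ)) ^ ((1:ℝ)/3) ≤ ((2:ℝ) ^ (2:ℕ)) ^ ((1:ℝ)/3) := by
      apply Real.rpow_le_rpow (by positivity) (by norm_num) (by norm_num)
    have h2 : ((3/2:ℝ) ^ (3:ℕ)) ^ ((1:ℝ)/3) = (3/2:ℝ) := by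
      rw [← Real.rpow_natCast (3/2:ℝ) 3, ← Real.rpow_mul (by norm_num)]
      norm_num
    have h3 : ((2:ℝ) ^ (2:ℕ)) ^ ((1:ℝ)/3) = q := by
      rw [← Real.rpow_natCast (2:ℝ) 2, ← Real.rpow_mul (by norm_num)]
      norm_num [hq]
    rw [h2, h3] at h1
    exact h1
  have hfibk : ∀ k, ∑ j ∈ T.filter (fun j => Nat.log 2 (m j) = k),
      ((m j : ℝ) ^ ((1:ℝ)/3))⁻¹ ≤ 2 * q ^ k := by
    intro k
    have hcard : (T.filter (fun j => Nat.log 2 (m j) = k)).card ≤ 2^(k+1) := by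
      have hsub : T.filter (fun j => Nat.log 2 (m j) = k)
          ⊆ T.filter (fun j => m j ≤ 2^(k+1) - 1) := by
        intro j hj
        rw [Finset.mem_filter] at *
        refine ⟨hj.1, ?_⟩
        have := Nat.lt_pow_succ_log_self (by norm_num : 1 < 2) (m j)
        rw [hj.2] at this
        omega
      calc (T.filter (fun j => Nat.log 2 (m j) = k)).card
          ≤ (T.filter (fun j => m j ≤ 2^(k+1) - 1)).card := Finset.card_le_card hsub
        _ ≤ 2^(k+1) - 1 := count_small T r _
        _ ≤ 2^(k+1) := Nat.sub_le _ _
    have hterm : ∀ j ∈ T.filter (fun j => Nat.log 2 (m j) = k),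
        ((m j : ℝ) ^ ((1:ℝ)/3))⁻¹ ≤ ((2:ℝ)^k) ^ (-(1:ℝ)/3) := by
      intro j hj
      rw [Finset.mem_filter] at hj
      have hmk : (2:ℕ)^k ≤ m j := by
        have := Nat.pow_log_le_self 2 (Nat.one_le_iff_ne_zero.1 (hm1 j hj.1))
        rw [hj.2] at this
        exact this
      have hmk' : ((2:ℝ)^k) ≤ (m j : ℝ) := by exact_mod_cast hmk
      have h2k : (0:ℝ) < (2:ℝ)^k := by positivity
      rw [show ((2:ℝ)^k) ^ (-(1:ℝ)/3) = (((2:ℝ)^k) ^ ((1:ℝ)/3))⁻¹ by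
        rw [← Real.rpow_neg h2k.le]; norm_num]
      apply inv_anti₀ (Real.rpow_pos_of_pos h2k _)
      exact Real.rpow_le_rpow h2k.le hmk' (by norm_num)
    calc ∑ j ∈ T.filter (fun j => Nat.log 2 (m j) = k), ((m j : ℝ) ^ ((1:ℝ)/3))⁻¹
        ≤ ∑ _j ∈ T.filter (fun j => Nat.log 2 (m j) = k), ((2:ℝ)^k) ^ (-(1:ℝ)/3) :=
          Finset.sum_le_sum hterm
      _ = ((T.filter (fun j => Nat.log 2 (m j) = k)).card : ℝ) * ((2:ℝ)^k) ^ (-(1:ℝ)/3) := by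
          rw [Finset.sum_const, nsmul_eq_mul]
      _ ≤ ((2:ℝ)^(k+1)) * ((2:ℝ)^k) ^ (-(1:ℝ)/3) := by
          apply mul_le_mul_of_nonneg_right _ (Real.rpow_nonneg (by positivity) _)
          exact_mod_cast hcard
      _ = 2 * q ^ k := by
          rw [← Real.rpow_natCast (2:ℝ) k, ← Real.rpow_mul (by norm_num : (0:ℝ) ≤ 2),
            ← Real.rpow_natCast (2:ℝ) (k+1), ← Real.rpow_add (by norm_num : (0:ℝ) < 2),
            hq, ← Real.rpow_natCast ((2:ℝ) ^ ((2:ℝ)/3)) k, ← Real.rpow_mul (by norm_num : (0:ℝ) ≤ 2)]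
          rw [show (2:ℝ) * (2:ℝ) ^ ((2:ℝ)/3 * (k:ℝ)) = (2:ℝ)^(1:ℝ) * (2:ℝ) ^ ((2:ℝ)/3 * (k:ℝ)) by
            rw [Real.rpow_one]]
          rw [← Real.rpow_add (by norm_num : (0:ℝ) < 2)]
          congr 1
          push_cast
          ring
  -- geometric sum
  have hgeom : ∑ k ∈ Finset.range (K+1), q ^ k ≤ 4 * (N:ℝ) ^ ((2:ℝ)/3) := by
    have hqne : q ≠ 1 := ne_of_gt hq1
    rw [geom_sum_eq hqne]
    have hqK : q ^ K ≤ (N:ℝ) ^ ((2:ℝ)/3) := by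
      have h2K : ((2:ℝ)^K) ≤ (N:ℝ) := by
        exact_mod_cast Nat.pow_log_le_self 2 (Nat.one_le_iff_ne_zero.1 hN)
      calc q ^ K = ((2:ℝ)^K) ^ ((2:ℝ)/3) := by
            rw [hq, ← Real.rpow_natCast ((2:ℝ) ^ ((2:ℝ)/3)) K,
              ← Real.rpow_mul (by norm_num : (0:ℝ) ≤ 2),
              ← Real.rpow_natCast (2:ℝ) K, ← Real.rpow_mul (by norm_num : (0:ℝ) ≤ 2)]
            rw [mul_comm]
        _ ≤ (N:ℝ) ^ ((2:ℝ)/3) := Real.rpow_le_rpow (by positivity) h2K (by norm_num)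
    have hnum : q ^ (K + 1) - 1 ≤ 2 * q ^ K := by
      have : q ^ (K+1) = q * q ^ K := by ring
      have hqKpos : (0:ℝ) < q ^ K := pow_pos (lt_trans one_pos hq1) K
      nlinarith
    have hden : (1:ℝ)/2 ≤ q - 1 := by linarith
    rw [div_le_iff₀ (by linarith)]
    nlinarith [hqK, pow_pos (lt_trans one_pos hq1) K, Real.rpow_nonneg (Nat.cast_nonneg N) ((2:ℝ)/3)]
  -- assemble
  calc ∑ j ∈ T, (r j)⁻¹ ≤ ∑ j ∈ T, 3 * d⁻¹ * ((m j : ℝ) ^ ((1:ℝ)/3))⁻¹ :=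
        Finset.sum_le_sum hinv
    _ = 3 * d⁻¹ * ∑ j ∈ T, ((m j : ℝ) ^ ((1:ℝ)/3))⁻¹ := by rw [Finset.mul_sum]
    _ ≤ 3 * d⁻¹ * ∑ k ∈ Finset.range (K+1), 2 * q ^ k := by
        apply mul_le_mul_of_nonneg_left _ (by positivity)
        rw [← hfiber]
        exact Finset.sum_le_sum (fun k _ => hfibk k)
    _ = 3 * d⁻¹ * (2 * ∑ k ∈ Finset.range (K+1), q ^ k) := by rw [← Finset.mul_sum]
    _ ≤ 3 * d⁻¹ * (2 * (4 * (N:ℝ) ^ ((2:ℝ)/3))) := by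
        apply mul_le_mul_of_nonneg_left _ (by positivity)
        linarith [hgeom]
    _ = 24 * (N:ℝ) ^ ((2:ℝ)/3) / d := by field_simp; ring


private lemma part1 (N : ℕ) (a : Fin N → Fin N → ℝ) (Q : Fin N → C3) (M : ℝ)
    (ha : ∀ ℓ j, 0 ≤ a ℓ j) (hsym : ∀ ℓ j, a ℓ j = a j ℓ)
    (hM : ∀ ℓ, ∑ j ∈ Finset.univ.erase ℓ, a ℓ j ≤ M) :
    (∑ ℓ, ∑ j ∈ Finset.univ.erase ℓ, a ℓ j * ‖Q j‖ * ‖Q ℓ‖) ≤ M * ∑ j, ‖Q j‖ ^ 2 := by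
  have key : ∀ ℓ j : Fin N, a ℓ j * ‖Q j‖ * ‖Q ℓ‖
      ≤ a ℓ j * ‖Q j‖^2 / 2 + a ℓ j * ‖Q ℓ‖^2 / 2 := by
    intro ℓ j
    nlinarith [ha ℓ j, norm_nonneg (Q j), norm_nonneg (Q ℓ), sq_nonneg (‖Q j‖ - ‖Q ℓ‖)]
  have hswap : (∑ ℓ, ∑ j ∈ Finset.univ.erase ℓ, a ℓ j * ‖Q j‖^2)
      = ∑ j, ∑ ℓ ∈ Finset.univ.erase j, a ℓ j * ‖Q j‖^2 :=
    Finset.sum_comm' (by intro x y; simp [Finset.mem_erase]; exact ne_comm)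
  have h1 : (∑ ℓ, ∑ j ∈ Finset.univ.erase ℓ, a ℓ j * ‖Q j‖^2) ≤ M * ∑ j, ‖Q j‖^2 := by
    rw [hswap, Finset.mul_sum]
    apply Finset.sum_le_sum
    intro j _
    rw [← Finset.sum_mul]
    have e : ∑ ℓ ∈ Finset.univ.erase j, a ℓ j = ∑ ℓ ∈ Finset.univ.erase j, a j ℓ :=
      Finset.sum_congr rfl (fun ℓ _ => hsym ℓ j)
    rw [e]
    exact mul_le_mul_of_nonneg_right (hM j) (sq_nonneg _)
  have h2 : (∑ ℓ, ∑ j ∈ Finset.univ.erase ℓ, a ℓ j * ‖Q ℓ‖^2) ≤ M * ∑ j, ‖Q j‖^2 := by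
    rw [Finset.mul_sum]
    apply Finset.sum_le_sum
    intro ℓ _
    rw [← Finset.sum_mul]
    exact mul_le_mul_of_nonneg_right (hM ℓ) (sq_nonneg _)
  calc (∑ ℓ, ∑ j ∈ Finset.univ.erase ℓ, a ℓ j * ‖Q j‖ * ‖Q ℓ‖)
      ≤ ∑ ℓ, ∑ j ∈ Finset.univ.erase ℓ, (a ℓ j * ‖Q j‖^2 / 2 + a ℓ j * ‖Q ℓ‖^2 / 2) := by
        apply Finset.sum_le_sum; intro ℓ _; apply Finset.sum_le_sum; intro j _; exact key ℓ j
    _ = (∑ ℓ, ∑ j ∈ Finset.univ.erase ℓ, a ℓ j * ‖Q j‖^2) / 2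
        + (∑ ℓ, ∑ j ∈ Finset.univ.erase ℓ, a ℓ j * ‖Q ℓ‖^2) / 2 := by
        simp only [Finset.sum_add_distrib, Finset.sum_div]
    _ ≤ (M * ∑ j, ‖Q j‖^2) / 2 + (M * ∑ j, ‖Q j‖^2) / 2 := by gcongr
    _ = M * ∑ j, ‖Q j‖^2 := by ring


private theorem part2 (Ω : Set E3) (hΩ : Bornology.IsBounded Ω) : ∃ C > 0,
      ∀ (N : ℕ) (d : ℝ) (z : Fin N → E3) (Q : Fin N → C3),
        0 < d → (∀ i, z i ∈ Ω) →
        (∀ i j, i ≠ j → d ≤ ‖z i - z j‖) →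
        (∑ ℓ, ∑ j ∈ Finset.univ.erase ℓ, ‖z ℓ - z j‖⁻¹ * ‖Q j‖ * ‖Q ℓ‖)
          ≤ C * d ^ (-3 : ℝ) * Real.sqrt N * d ^ ((3 : ℝ) / 2) * ∑ j, ‖Q j‖ ^ 2 := by
  obtain ⟨R₀, hR₀⟩ := hΩ.subset_closedBall (0 : E3)
  set R : ℝ := max R₀ 1 with hRdef
  have hR1 : (1:ℝ) ≤ R := le_max_right _ _
  have hRpos : (0:ℝ) < R := lt_of_lt_of_le one_pos hR1
  have hΩR : Ω ⊆ Metric.closedBall (0 : E3) R :=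
    hR₀.trans (Metric.closedBall_subset_closedBall (le_max_left _ _))
  refine ⟨48 * R ^ ((1:ℝ)/2), by positivity, ?_⟩
  intro N d z Q hd hz hsep
  have hQ : (0:ℝ) ≤ ∑ j, ‖Q j‖ ^ 2 := Finset.sum_nonneg (fun j _ => sq_nonneg _)
  have hRHSfac : (0:ℝ) ≤ 48 * R ^ ((1:ℝ)/2) * d ^ (-3 : ℝ) * Real.sqrt N * d ^ ((3:ℝ)/2) := by
    have := Real.sqrt_nonneg (N:ℝ)
    positivity
  -- trivial cases N ≤ 1
  rcases lt_or_ge N 2 with hN2 | hN2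
  · interval_cases N
    · simp
    · have he : (Finset.univ.erase (0 : Fin 1)) = ∅ := by decide
      have : ∀ ℓ : Fin 1, Finset.univ.erase ℓ = ∅ := by decide
      have hz0 : (∑ ℓ : Fin 1, ∑ j ∈ Finset.univ.erase ℓ, ‖z ℓ - z j‖⁻¹ * ‖Q j‖ * ‖Q ℓ‖) = 0 := by
        simp [this]
      rw [hz0]
      exact mul_nonneg hRHSfac hQ
  -- main case N ≥ 2
  have hNpos : (0:ℝ) < N := by exact_mod_cast lt_of_lt_of_le two_pos hN2
  -- d ≤ 2R
  have hd2R : d ≤ 2 * R := by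
    have h01 : (⟨0, by omega⟩ : Fin N) ≠ ⟨1, by omega⟩ := by simp [Fin.ext_iff]
    have h1 := hsep _ _ h01
    have ha := hΩR (hz ⟨0, by omega⟩)
    have hb := hΩR (hz ⟨1, by omega⟩)
    rw [Metric.mem_closedBall] at ha hb
    have : ‖z ⟨0, by omega⟩ - z ⟨1, by omega⟩‖
        ≤ dist (z ⟨0, by omega⟩) 0 + dist 0 (z ⟨1, by omega⟩) := by
      rw [← dist_eq_norm]
      exact dist_triangle _ _ _
    rw [dist_comm (0:E3)] at this
    linarith
  -- global packing: N ≤ 64 R^3 / d^3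
  have hpackN : (N:ℝ) * (d/2)^3 ≤ (2*R)^3 := by
    have h := packing z d R hd hsep 0 Finset.univ (fun i _ => hΩR (hz i)) (by linarith)
    have : ((Finset.univ : Finset (Fin N)).card : ℝ) = N := by
      rw [Finset.card_univ, Fintype.card_fin]
    rw [this] at h
    refine h.trans (pow_le_pow_left₀ (by linarith) (by linarith) 3)
  have hNle : (N:ℝ) ≤ 64 * R^3 / d^3 := by
    rw [le_div_iff₀ (by positivity)]
    nlinarith
  -- N^(1/6) ≤ 2 R^(1/2) d^(-1/2)
  set X : ℝ := 2 * R ^ ((1:ℝ)/2) * d ^ (-(1:ℝ)/2) with hX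
  have hXpos : 0 < X := by positivity
  have hX6 : X ^ (6:ℕ) = 64 * R^3 / d^3 := by
    rw [hX]
    rw [mul_pow, mul_pow]
    rw [← Real.rpow_natCast (R ^ ((1:ℝ)/2)) 6, ← Real.rpow_mul hRpos.le,
      ← Real.rpow_natCast (d ^ (-(1:ℝ)/2)) 6, ← Real.rpow_mul hd.le]
    norm_num
    ring
  have hN16 : (N:ℝ) ^ ((1:ℝ)/6) ≤ X := by
    have h1 : (N:ℝ) ^ ((1:ℝ)/6) ≤ (X ^ (6:ℕ)) ^ ((1:ℝ)/6) :=
      Real.rpow_le_rpow (by positivity) (by rw [hX6]; exact hNle) (by norm_num)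
    rwa [← Real.rpow_natCast X 6, ← Real.rpow_mul hXpos.le, (by norm_num : ((6:ℕ):ℝ) * ((1:ℝ)/6) = 1), Real.rpow_one] at h1
  -- apply part1
  have hmain := part1 N (fun ℓ j => ‖z ℓ - z j‖⁻¹) Q (24 * (N:ℝ) ^ ((2:ℝ)/3) / d)
    (fun ℓ j => by positivity)
    (fun ℓ j => by beta_reduce; rw [norm_sub_rev])
    (fun ℓ => row_bound z d hd hsep ℓ)
  refine hmain.trans ?_
  apply mul_le_mul_of_nonneg_right _ hQ
  -- M ≤ C d^{-3} √N d^{3/2}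
  have hsqrt : Real.sqrt (N:ℝ) = (N:ℝ) ^ ((1:ℝ)/2) := by
    rw [Real.sqrt_eq_rpow]
  calc 24 * (N:ℝ) ^ ((2:ℝ)/3) / d
      = 24 * ((N:ℝ) ^ ((1:ℝ)/2) * (N:ℝ) ^ ((1:ℝ)/6)) * d ^ (-(1:ℝ)) := by
        rw [← Real.rpow_add hNpos, Real.rpow_neg_one]
        norm_num
        ring
    _ ≤ 24 * ((N:ℝ) ^ ((1:ℝ)/2) * X) * d ^ (-(1:ℝ)) := by
        have h1 : (0:ℝ) ≤ (N:ℝ) ^ ((1:ℝ)/2) := by positivity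
        have h2 : (0:ℝ) ≤ d ^ (-(1:ℝ)) := by positivity
        nlinarith [hN16, mul_le_mul_of_nonneg_left hN16 h1]
    _ = 48 * R ^ ((1:ℝ)/2) * (N:ℝ) ^ ((1:ℝ)/2) * (d ^ (-(1:ℝ)/2) * d ^ (-(1:ℝ))) := by
        rw [hX]; ring
    _ = 48 * R ^ ((1:ℝ)/2) * (N:ℝ) ^ ((1:ℝ)/2) * (d ^ (-3:ℝ) * d ^ ((3:ℝ)/2)) := by
        rw [← Real.rpow_add hd, ← Real.rpow_add hd]
        norm_num
    _ = 48 * R ^ ((1:ℝ)/2) * d ^ (-3:ℝ) * Real.sqrt N * d ^ ((3:ℝ)/2) := by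
        rw [hsqrt]; ring


/-- The quadratic-form summation estimate with symmetric nonnegative weights, and its
consequence for points with pairwise separation `d` in a fixed bounded domain `Ω ⊂ ℝ³`. -/
theorem weighted_quadratic_form_estimate :
    (∀ (N : ℕ) (a : Fin N → Fin N → ℝ) (Q : Fin N → C3) (M : ℝ),
        (∀ ℓ j, 0 ≤ a ℓ j) → (∀ ℓ j, a ℓ j = a j ℓ) →
        (∀ ℓ, ∑ j ∈ Finset.univ.erase ℓ, a ℓ j ≤ M) →
        (∑ ℓ, ∑ j ∈ Finset.univ.erase ℓ, a ℓ j * ‖Q j‖ * ‖Q ℓ‖)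
          ≤ M * ∑ j, ‖Q j‖ ^ 2) ∧
    (∀ Ω : Set E3, Bornology.IsBounded Ω → ∃ C > 0,
      ∀ (N : ℕ) (d : ℝ) (z : Fin N → E3) (Q : Fin N → C3),
        0 < d → (∀ i, z i ∈ Ω) →
        (∀ i j, i ≠ j → d ≤ ‖z i - z j‖) →
        (∑ ℓ, ∑ j ∈ Finset.univ.erase ℓ, ‖z ℓ - z j‖⁻¹ * ‖Q j‖ * ‖Q ℓ‖)
          ≤ C * d ^ (-3 : ℝ) * Real.sqrt N * d ^ ((3 : ℝ) / 2) * ∑ j, ‖Q j‖ ^ 2) := by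
  exact ⟨part1, part2⟩
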